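/- For the concrete Diamond ensemble with r_j = 4j and N = 4M² + 2, the length of the horizontal sides of each partition rectangle, namely 2π√(1 - h_j²)/r_j where h_j = 1 - 2N_j/N and N_j = 2j² - 2j + 1, satisfies π/(√2·√N) < 2π√(1 - h_j²)/(4j) < π√2/√N for all 1 ≤ j ≤ M. -/

import Mathlib

open Real

/-- For the concrete Diamond ensemble with `r_j = 4j` and `N = 4M² + 2`, the length of
the horizontal sides of each partition rectangle, `2π√(1 - h_j²)/(4j)` where
`h_j = 1 - 2N_j/N` and `N_j = 2j² - 2j + 1`, lies strictly between `π/(√2 √N)` and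
`π√2/√N` for all `1 ≤ j ≤ M`. -/
theorem diamond_horizontal_side_bounds (M : ℕ) (hM : 1 ≤ M) (j : ℕ) (hj : 1 ≤ j)
    (hjM : j ≤ M) (N Nj hj' : ℝ) (hN : N = 4 * (M : ℝ) ^ 2 + 2)
    (hNj : Nj = 2 * (j : ℝ) ^ 2 - 2 * j + 1) (hhj : hj' = 1 - 2 * Nj / N) :
    π / (Real.sqrt 2 * Real.sqrt N) < 2 * π * Real.sqrt (1 - hj' ^ 2) / (4 * j) ∧
      2 * π * Real.sqrt (1 - hj' ^ 2) / (4 * j) < π * Real.sqrt 2 / Real.sqrt N := by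
  have hjR : (1:ℝ) ≤ (j:ℝ) := by exact_mod_cast hj
  have hjM' : (j:ℝ) ≤ (M:ℝ) := by exact_mod_cast hjM
  have hjpos : (0:ℝ) < j := by linarith
  have hNpos : (0:ℝ) < N := by nlinarith [sq_nonneg (M:ℝ)]
  have key : 1 - hj' ^ 2 = 4 * Nj * (N - Nj) / N ^ 2 := by
    rw [hhj]; field_simp; ring
  have hNjpos : (0:ℝ) < Nj := by nlinarith [sq_nonneg ((j:ℝ) - 1)]
  have h1 : (j:ℝ) ^ 2 ≤ Nj := by nlinarith [sq_nonneg ((j:ℝ) - 1)]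
  have h2 : 2 * Nj < N := by nlinarith
  have h3 : Nj < 2 * (j:ℝ) ^ 2 := by nlinarith
  have lb : 2 * (j:ℝ) ^ 2 / N < 1 - hj' ^ 2 := by
    rw [key, div_lt_div_iff₀ hNpos (by positivity)]
    nlinarith [mul_pos hNjpos (show (0:ℝ) < N - 2*Nj by linarith),
      mul_nonneg (sub_nonneg.mpr h1) hNpos.le, mul_pos hNjpos hNpos]
  have ub : 1 - hj' ^ 2 < 8 * (j:ℝ) ^ 2 / N := by
    rw [key, div_lt_div_iff₀ (by positivity) hNpos]
    nlinarith [mul_pos hNjpos (show (0:ℝ) < Nj by linarith),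
      mul_pos (show (0:ℝ) < 2*(j:ℝ)^2 - Nj by linarith) hNpos,
      mul_pos hNjpos hNpos]
  have sNpos : 0 < Real.sqrt N := Real.sqrt_pos.mpr hNpos
  have s2pos : 0 < Real.sqrt 2 := by positivity
  have s22 : Real.sqrt 2 * Real.sqrt 2 = 2 := Real.mul_self_sqrt (by norm_num)
  have hπ := Real.pi_pos
  have e1 : Real.sqrt (2 * (j:ℝ) ^ 2 / N) = Real.sqrt 2 * j / Real.sqrt N := by
    have : 2 * (j:ℝ) ^ 2 / N = (Real.sqrt 2 * j / Real.sqrt N) ^ 2 := by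
      rw [div_pow, mul_pow, Real.sq_sqrt (by norm_num : (0:ℝ) ≤ 2),
        Real.sq_sqrt hNpos.le]
    rw [this, Real.sqrt_sq (by positivity)]
  have e2 : Real.sqrt (8 * (j:ℝ) ^ 2 / N) = 2 * Real.sqrt 2 * j / Real.sqrt N := by
    have : 8 * (j:ℝ) ^ 2 / N = (2 * Real.sqrt 2 * j / Real.sqrt N) ^ 2 := by
      rw [div_pow, mul_pow, mul_pow, Real.sq_sqrt (by norm_num : (0:ℝ) ≤ 2),
        Real.sq_sqrt hNpos.le]
      ring
    rw [this, Real.sqrt_sq (by positivity)]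
  have h1' : Real.sqrt 2 * j / Real.sqrt N < Real.sqrt (1 - hj' ^ 2) := by
    rw [← e1]; exact Real.sqrt_lt_sqrt (by positivity) lb
  have h2' : Real.sqrt (1 - hj' ^ 2) < 2 * Real.sqrt 2 * j / Real.sqrt N := by
    rw [← e2]
    exact Real.sqrt_lt_sqrt (le_trans (by positivity) lb.le) ub
  constructor
  · calc π / (Real.sqrt 2 * Real.sqrt N)
        = 2 * π * (Real.sqrt 2 * j / Real.sqrt N) / (4 * j) := by
          rw [div_eq_div_iff (by positivity) (by positivity)]
          field_simp
          linear_combination (-2) * s22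
      _ < 2 * π * Real.sqrt (1 - hj' ^ 2) / (4 * j) := by
          have h4 : (0:ℝ) < 4 * j := by positivity
          exact div_lt_div_of_pos_right
            (mul_lt_mul_of_pos_left h1' (by positivity)) h4
  · calc 2 * π * Real.sqrt (1 - hj' ^ 2) / (4 * j)
        < 2 * π * (2 * Real.sqrt 2 * j / Real.sqrt N) / (4 * j) := by
          have h4 : (0:ℝ) < 4 * j := by positivity
          exact div_lt_div_of_pos_right
            (mul_lt_mul_of_pos_left h2' (by positivity)) h4
      _ = π * Real.sqrt 2 / Real.sqrt N := by
          field_simp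
          ring
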